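/- For every positive integer m, one has ∫₀¹ |S_m(ω)| dω ≥ ∫₀¹ |W_{2m−1}(ω)| dω − ∫₀¹ |W_{m−1}(ω)| dω, where W_0 ≡ 0. -/

import Mathlib

open MeasureTheory Real

/-- The quadratic Weyl sum `S_m(ω) = ∑_{j=1}^m exp(2πiω(j²-j))`. -/
noncomputable def S (ω : ℝ) (m : ℕ) : ℂ :=
  ∑ j ∈ Finset.Icc 1 m,
    Complex.exp (2 * (Real.pi : ℂ) * Complex.I * (ω : ℂ) * ((j : ℂ) ^ 2 - (j : ℂ)))

/-- The purely quadratic Weyl sum `W_m(ω) = ∑_{j=1}^m exp(2πiωj²)`, with `W_0 = 0`. -/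
noncomputable def W (ω : ℝ) (m : ℕ) : ℂ :=
  ∑ j ∈ Finset.Icc 1 m,
    Complex.exp (2 * (Real.pi : ℂ) * Complex.I * (ω : ℂ) * (j : ℂ) ^ 2)

lemma exp_int_one (n : ℤ) : Complex.exp (2 * (Real.pi : ℂ) * Complex.I * (n : ℂ)) = 1 := by
  rw [show 2 * (Real.pi : ℂ) * Complex.I * (n : ℂ) = (n : ℂ) * (2 * Real.pi * Complex.I) by ring]
  exact Complex.exp_int_mul_two_pi_mul_I n

lemma S_periodic (m : ℕ) : Function.Periodic (fun ω => S ω m) 1 := by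
  intro ω
  simp only [S]
  refine Finset.sum_congr rfl fun j hj => ?_
  have h1 : ((j:ℂ)^2 - j) = (((j:ℤ)^2 - j : ℤ) : ℂ) := by push_cast; ring
  rw [show 2 * (Real.pi : ℂ) * Complex.I * ((ω:ℝ) + 1 : ℝ) * ((j:ℂ)^2 - j)
      = 2 * (Real.pi : ℂ) * Complex.I * (ω:ℂ) * ((j:ℂ)^2 - j)
        + 2 * (Real.pi : ℂ) * Complex.I * ((j:ℂ)^2 - j) by push_cast; ring,
    Complex.exp_add, h1, exp_int_one, mul_one]

lemma W_periodic (m : ℕ) : Function.Periodic (fun ω => W ω m) 1 := by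
  intro ω
  simp only [W]
  refine Finset.sum_congr rfl fun j hj => ?_
  have h1 : ((j:ℂ)^2) = (((j:ℤ)^2 : ℤ) : ℂ) := by push_cast; ring
  rw [show 2 * (Real.pi : ℂ) * Complex.I * ((ω:ℝ) + 1 : ℝ) * ((j:ℂ)^2)
      = 2 * (Real.pi : ℂ) * Complex.I * (ω:ℂ) * ((j:ℂ)^2)
        + 2 * (Real.pi : ℂ) * Complex.I * ((j:ℂ)^2) by push_cast; ring,
    Complex.exp_add, h1, exp_int_one, mul_one]

lemma S_continuous (m : ℕ) : Continuous fun ω : ℝ => S ω m := by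
  unfold S; fun_prop

lemma W_continuous (m : ℕ) : Continuous fun ω : ℝ => W ω m := by
  unfold W; fun_prop

lemma decomp (ω : ℝ) (m : ℕ) (hm : 1 ≤ m) :
    W ω (2 * m - 1)
      = Complex.exp (2 * (Real.pi : ℂ) * Complex.I * (ω : ℂ)) * S (4 * ω) m
        + W (4 * ω) (m - 1) := by
  have hset : Finset.Icc 1 (2 * m - 1)
      = (Finset.Icc 1 m).image (fun k => 2 * k - 1)
        ∪ (Finset.Icc 1 (m - 1)).image (fun k => 2 * k) := by
    ext j
    simp only [Finset.mem_Icc, Finset.mem_union, Finset.mem_image]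
    constructor
    · rintro ⟨h1, h2⟩
      rcases Nat.even_or_odd j with ⟨k, hk⟩ | ⟨k, hk⟩
      · right; exact ⟨k, by omega, by omega⟩
      · left; exact ⟨k + 1, by omega, by omega⟩
    · rintro (⟨k, hk, rfl⟩ | ⟨k, hk, rfl⟩) <;> omega
  have hdisj : Disjoint ((Finset.Icc 1 m).image (fun k => 2 * k - 1))
      ((Finset.Icc 1 (m - 1)).image (fun k => 2 * k)) := by
    rw [Finset.disjoint_left]
    rintro a ha hb
    simp only [Finset.mem_image, Finset.mem_Icc] at ha hb
    obtain ⟨k, hk, rfl⟩ := ha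
    obtain ⟨l, hl, h⟩ := hb
    omega
  rw [W, hset, Finset.sum_union hdisj, Finset.sum_image (by intro a ha b hb h; simp only [Finset.mem_coe, Finset.mem_Icc] at ha hb h; omega),
    Finset.sum_image (by intro a ha b hb h; simp only [Finset.mem_coe, Finset.mem_Icc] at ha hb h; omega)]
  congr 1
  · rw [S, Finset.mul_sum]
    refine Finset.sum_congr rfl fun k hk => ?_
    rw [Finset.mem_Icc] at hk
    rw [← Complex.exp_add]
    congr 1
    have : ((2 * k - 1 : ℕ) : ℂ) = 2 * (k : ℂ) - 1 := by
      have : (2 * k - 1 : ℕ) = 2 * k - 1 := rfl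
      push_cast [Nat.cast_sub (by omega : 1 ≤ 2 * k)]; ring
    rw [this]; push_cast; ring
  · rw [W]
    refine Finset.sum_congr rfl fun k hk => ?_
    congr 1
    push_cast; ring

lemma integral_comp_four {f : ℝ → ℝ} (hf : Continuous f)
    (hp : Function.Periodic f 1) :
    ∫ x in (0:ℝ)..1, f (4 * x) = ∫ x in (0:ℝ)..1, f x := by
  have h_int : ∀ t₁ t₂ : ℝ, IntervalIntegrable f MeasureSpace.volume t₁ t₂ :=
    fun t₁ t₂ => hf.intervalIntegrable t₁ t₂
  rw [intervalIntegral.integral_comp_mul_left f (by norm_num : (4:ℝ) ≠ 0)]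
  have h4 : (4:ℝ) * 1 = 0 + (4:ℤ) • (1:ℝ) := by norm_num
  rw [mul_zero, h4, hp.intervalIntegral_add_zsmul_eq 4 0 h_int]
  simp

/-- `∫₀¹ |S_m(ω)| dω ≥ ∫₀¹ |W_{2m-1}(ω)| dω - ∫₀¹ |W_{m-1}(ω)| dω`. -/
theorem stmt_13 (m : ℕ) (hm : 1 ≤ m) :
    (∫ ω in (0:ℝ)..1, ‖W ω (2 * m - 1)‖) - ∫ ω in (0:ℝ)..1, ‖W ω (m - 1)‖
      ≤ ∫ ω in (0:ℝ)..1, ‖S ω m‖ := by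
  have hnormexp : ∀ ω : ℝ, ‖Complex.exp (2 * (Real.pi : ℂ) * Complex.I * (ω : ℂ))‖ = 1 := by
    intro ω
    rw [Complex.norm_exp]
    have : (2 * (Real.pi : ℂ) * Complex.I * (ω : ℂ)).re = 0 := by
      simp [Complex.mul_re, Complex.mul_im]
    rw [this, Real.exp_zero]
  have key : ∀ ω : ℝ, ‖W ω (2 * m - 1)‖ ≤ ‖S (4 * ω) m‖ + ‖W (4 * ω) (m - 1)‖ := by
    intro ω
    rw [decomp ω m hm]
    calc ‖_ + W (4 * ω) (m-1)‖ ≤ _ + ‖W (4 * ω) (m-1)‖ := norm_add_le _ _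
      _ = ‖S (4 * ω) m‖ + ‖W (4 * ω) (m - 1)‖ := by rw [norm_mul, hnormexp, one_mul]
  have hScont := (S_continuous m).norm
  have hWcont := (W_continuous (m - 1)).norm
  have hW2cont := (W_continuous (2 * m - 1)).norm
  have hS4 : ∫ ω in (0:ℝ)..1, ‖S (4 * ω) m‖ = ∫ ω in (0:ℝ)..1, ‖S ω m‖ :=
    integral_comp_four hScont fun ω => by simp [S_periodic m ω]
  have hW4 : ∫ ω in (0:ℝ)..1, ‖W (4 * ω) (m - 1)‖ = ∫ ω in (0:ℝ)..1, ‖W ω (m - 1)‖ :=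
    integral_comp_four hWcont fun ω => by simp [W_periodic (m - 1) ω]
  have hi1 : IntervalIntegrable (fun ω : ℝ => ‖S (4 * ω) m‖) MeasureSpace.volume 0 1 :=
    Continuous.intervalIntegrable (by unfold S; fun_prop) _ _
  have hi2 : IntervalIntegrable (fun ω : ℝ => ‖W (4 * ω) (m - 1)‖) MeasureSpace.volume 0 1 :=
    Continuous.intervalIntegrable (by unfold W; fun_prop) _ _
  have hmono : (∫ ω in (0:ℝ)..1, ‖W ω (2 * m - 1)‖)
      ≤ ∫ ω in (0:ℝ)..1, (‖S (4 * ω) m‖ + ‖W (4 * ω) (m - 1)‖) := by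
    apply intervalIntegral.integral_mono_on (by norm_num)
      (hW2cont.intervalIntegrable _ _) (hi1.add hi2)
    intro x _
    exact key x
  rw [intervalIntegral.integral_add hi1 hi2, hS4, hW4] at hmono
  linarith
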